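/- Assume Σ_{jj} > 0 and R_{jj} ≠ 0 for all j, and suppose (π; ν_1,…,ν_d) satisfies the basic adjoint relationship (BAR) for (Σ, μ, R). Let (K,L) be a partition of {1,…,d} into nonempty sets, and suppose the moment generating function factorizes: φ(θ) = φ(θ̂^K)·φ(θ̂^L) for all θ ≤ 0 componentwise, where θ̂^U denotes the vector agreeing with θ on coordinates in U and equal to 0 elsewhere. Then for every j ∈ K and every θ ≤ 0 componentwise, φ_j(θ) = φ_j(θ̂^K)·φ(θ̂^L). -/

import Mathlib

open Matrix MeasureTheory Filter Topology



section helpers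
lemma dot_update {d : ℕ} (θ x : Fin d → ℝ) (j : Fin d) (c : ℝ) :
    Function.update θ j c ⬝ᵥ x = θ ⬝ᵥ x + (c - θ j) * x j := by
  have h : ∀ m, Function.update θ j c m * x m
      = θ m * x m + (if m = j then (c - θ j) * x j else 0) := by
    intro m
    by_cases hm : m = j
    · subst hm; simp [Function.update]; ring
    · simp [Function.update, hm]
  simp only [dotProduct, h, Finset.sum_add_distrib, Finset.sum_ite_eq' Finset.univ,
    Finset.mem_univ, if_true]

lemma update_eq_add_single {d : ℕ} (θ : Fin d → ℝ) (j : Fin d) (c : ℝ) :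
    Function.update θ j (θ j + c) = θ + Pi.single j c := by
  funext m
  by_cases hm : m = j
  · subst hm; simp
  · simp [Function.update, hm, Pi.single_eq_of_ne hm]

lemma quad_update {d : ℕ} (S : Matrix (Fin d) (Fin d) ℝ) (hS : S.IsSymm)
    (θ : Fin d → ℝ) (j : Fin d) (c : ℝ) :
    Function.update θ j (θ j + c) ⬝ᵥ S.mulVec (Function.update θ j (θ j + c))
      = θ ⬝ᵥ S.mulVec θ + 2 * c * (S.mulVec θ) j + c ^ 2 * S j j := by
  rw [update_eq_add_single]
  rw [S.mulVec_add θ _, dotProduct_add, add_dotProduct, add_dotProduct]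
  have h1 : Pi.single j c ⬝ᵥ S.mulVec θ = c * (S.mulVec θ) j := single_dotProduct _ _ _
  have h2 : θ ⬝ᵥ S.mulVec (Pi.single j c) = (S.mulVec θ) j * c := by
    rw [mulVec_single]
    rw [show MulOpposite.op c • S.col j = (fun i => S i j * c) from by
      ext i; simp [Matrix.col, op_smul_eq_mul]]
    have he : θ ⬝ᵥ (fun i => S i j * c) = (∑ i, θ i * S i j) * c := by
      simp [dotProduct, Finset.sum_mul, mul_assoc]
    rw [he]
    congr 1
    simp only [mulVec, dotProduct]
    exact Finset.sum_congr rfl fun k _ => by rw [mul_comm, hS.apply]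
  have h3 : Pi.single j c ⬝ᵥ S.mulVec (Pi.single j c) = c * (S j j * c) := by
    rw [mulVec_single, single_dotProduct]
    simp [Matrix.col, op_smul_eq_mul]
  rw [h1, h2, h3]
  ring

lemma exp_dot_cont {d : ℕ} (w : Fin d → ℝ) :
    Continuous (fun x : Fin d → ℝ => Real.exp (w ⬝ᵥ x)) := by
  exact Real.continuous_exp.comp
    (continuous_finset_sum _ fun m _ => continuous_const.mul (continuous_apply m))

lemma phib_tendsto_zero {d : ℕ} (ν : Measure (Fin d → ℝ)) [IsFiniteMeasure ν]
    {i j : Fin d}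
    (hsupp : ν {x | ¬ ∀ m, 0 ≤ x m} = 0)
    (hconc : ν {x | x i ≠ 0} = 0)
    (hpair : ν {x | x i = 0 ∧ x j = 0} = 0)
    (θ : Fin d → ℝ) (hθ : ∀ m, θ m ≤ 0) :
    Tendsto (fun n : ℕ => ∫ x, Real.exp (Function.update θ j (θ j - n) ⬝ᵥ x) ∂ν)
      atTop (𝓝 0) := by
  have h0 : (0 : ℝ) = ∫ x : Fin d → ℝ, (0 : ℝ) ∂ν := by simp
  rw [h0]
  have hsupp' : ∀ᵐ x ∂ν, ∀ m, 0 ≤ x m := by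
    rw [MeasureTheory.ae_iff]; exact hsupp
  have hconc' : ∀ᵐ x ∂ν, x i = 0 := by
    rw [MeasureTheory.ae_iff]; simpa using hconc
  have hpair' : ∀ᵐ x ∂ν, ¬ (x i = 0 ∧ x j = 0) := by
    rw [MeasureTheory.ae_iff]; simpa using hpair
  apply tendsto_integral_of_dominated_convergence (fun _ => (1:ℝ))
  · exact fun n => (exp_dot_cont _).aestronglyMeasurable
  · exact integrable_const 1
  · intro n
    filter_upwards [hsupp'] with x hx
    rw [Real.norm_eq_abs, abs_of_pos (Real.exp_pos _), Real.exp_le_one_iff]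
    apply Finset.sum_nonpos
    intro m _
    apply mul_nonpos_of_nonpos_of_nonneg _ (hx m)
    by_cases hm : m = j
    · rw [hm, Function.update_self]
      linarith [hθ j, Nat.cast_nonneg (α := ℝ) n]
    · rw [Function.update_of_ne hm]; exact hθ m
  · filter_upwards [hsupp', hconc', hpair'] with x hx hxi hxij
    have hxj : 0 < x j := lt_of_le_of_ne (hx j) fun h => hxij ⟨hxi, h.symm⟩
    have heq : ∀ n : ℕ, Real.exp (Function.update θ j (θ j - n) ⬝ᵥ x)
        = Real.exp (θ ⬝ᵥ x + -((n:ℝ) * x j)) := by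
      intro n; rw [dot_update]; ring_nf
    simp_rw [heq]
    have h1 : Tendsto (fun n : ℕ => (n:ℝ) * x j) atTop atTop :=
      (tendsto_natCast_atTop_atTop).atTop_mul_const hxj
    have h2 : Tendsto (fun n : ℕ => θ ⬝ᵥ x + -((n:ℝ) * x j)) atTop atBot :=
      tendsto_atBot_add_const_left _ _ (tendsto_neg_atTop_atBot.comp h1)
    exact Real.tendsto_exp_atBot.comp h2
end helpers

lemma div_div_helper (x y c : ℝ) (hy : y ≠ 0) (hc : c ≠ 0) :
    x / c / (y / c ^ 2) = c * (x / y) := by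
  field_simp

lemma main_limit {d : ℕ}
    (S : Matrix (Fin d) (Fin d) ℝ) (hSsymm : S.IsSymm)
    (μ : Fin d → ℝ) (R : Matrix (Fin d) (Fin d) ℝ) (j : Fin d) (hSj : 0 < S j j)
    (ν : Fin d → Measure (Fin d → ℝ)) (hνfin : ∀ i, IsFiniteMeasure (ν i))
    (hνsupp : ∀ i, ν i {x : Fin d → ℝ | ¬ ∀ m, 0 ≤ x m} = 0)
    (hνconc : ∀ i, ν i {x : Fin d → ℝ | x i ≠ 0} = 0)
    (hνpair : ∀ i k : Fin d, i ≠ k → ν i {x : Fin d → ℝ | x i = 0 ∧ x k = 0} = 0)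
    (φ : (Fin d → ℝ) → ℝ)
    (φb : Fin d → (Fin d → ℝ) → ℝ)
    (hφb : ∀ i θ, φb i θ = ∫ x, Real.exp (θ ⬝ᵥ x) ∂(ν i))
    (hBAR : ∀ θ : Fin d → ℝ, (∀ m, θ m ≤ 0) →
      (-(1/2 : ℝ) * (θ ⬝ᵥ S.mulVec θ) - μ ⬝ᵥ θ) * φ θ
        = ∑ i, ((fun m => R m i) ⬝ᵥ θ) * φb i θ)
    (θ : Fin d → ℝ) (hθ : ∀ m, θ m ≤ 0) :
    Tendsto (fun n : ℕ => (n : ℝ) * φ (Function.update θ j (θ j - n))) atTop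
      (𝓝 (2 * R j j * φb j θ / S j j)) := by
  have hupd_le : ∀ n : ℕ, ∀ m, Function.update θ j (θ j - (n:ℝ)) m ≤ 0 := by
    intro n m
    by_cases hm : m = j
    · rw [hm, Function.update_self]
      linarith [hθ j, Nat.cast_nonneg (α := ℝ) n]
    · rw [Function.update_of_ne hm]; exact hθ m
  -- φb j is constant along upd
  have hconst : ∀ n : ℕ, φb j (Function.update θ j (θ j - (n:ℝ))) = φb j θ := by
    intro n
    rw [hφb, hφb]
    apply integral_congr_ae
    have hconc' : ∀ᵐ x ∂(ν j), x j = 0 := by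
      rw [MeasureTheory.ae_iff]; simpa using hνconc j
    filter_upwards [hconc'] with x hxj
    rw [dot_update, hxj, mul_zero, add_zero]
  -- φb i → 0 for i ≠ j
  have hzero : ∀ i, i ≠ j →
      Tendsto (fun n : ℕ => φb i (Function.update θ j (θ j - (n:ℝ)))) atTop (𝓝 0) := by
    intro i hij
    have := hνfin i
    simp_rw [hφb]
    exact phib_tendsto_zero (ν i) (hνsupp i) (hνconc i) (hνpair i j hij) θ hθ
  set A : ℝ := -(1/2 : ℝ) * (θ ⬝ᵥ S.mulVec θ) - μ ⬝ᵥ θ with hA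
  set B : ℝ := (S.mulVec θ) j + μ j with hB
  -- the BAR identity along upd
  have hBARn : ∀ n : ℕ,
      (A + (n:ℝ) * B - (1/2 : ℝ) * S j j * (n:ℝ)^2) * φ (Function.update θ j (θ j - (n:ℝ)))
        = ∑ i, (((fun m => R m i) ⬝ᵥ θ) - (n:ℝ) * R j i)
            * φb i (Function.update θ j (θ j - (n:ℝ))) := by
    intro n
    have h1 := hBAR _ (hupd_le n)
    have e1 : Function.update θ j (θ j - (n:ℝ)) = Function.update θ j (θ j + (-(n:ℝ))) := by
      rw [sub_eq_add_neg]
    have e2 : μ ⬝ᵥ Function.update θ j (θ j + (-(n:ℝ))) = μ ⬝ᵥ θ + μ j * (-(n:ℝ)) := by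
      rw [update_eq_add_single, dotProduct_add, dotProduct_single]
    have e3 : (-(1/2 : ℝ) * (Function.update θ j (θ j - (n:ℝ)) ⬝ᵥ
        S.mulVec (Function.update θ j (θ j - (n:ℝ))))
        - μ ⬝ᵥ Function.update θ j (θ j - (n:ℝ)))
        = A + (n:ℝ) * B - (1/2 : ℝ) * S j j * (n:ℝ)^2 := by
      rw [e1, quad_update S hSsymm θ j (-(n:ℝ)), e2, hA, hB]
      ring
    have e4 : ∀ i, ((fun m => R m i) ⬝ᵥ Function.update θ j (θ j - (n:ℝ)))
        = ((fun m => R m i) ⬝ᵥ θ) - (n:ℝ) * R j i := by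
      intro i
      rw [dotProduct_comm, dot_update, dotProduct_comm θ]
      ring
    rw [e3] at h1
    rw [h1]
    exact Finset.sum_congr rfl fun i _ => by rw [e4]
  -- numerator limit
  have hnpow : Tendsto (fun n : ℕ => ((n:ℝ))^2) atTop atTop :=
    (tendsto_pow_atTop two_ne_zero).comp tendsto_natCast_atTop_atTop
  have hnum : Tendsto (fun n : ℕ => ∑ i,
      ((((fun m => R m i) ⬝ᵥ θ) / (n:ℝ)) - R j i) * φb i (Function.update θ j (θ j - (n:ℝ))))
      atTop (𝓝 (-(R j j * φb j θ))) := by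
    have hsum : Tendsto (fun n : ℕ => ∑ i,
        ((((fun m => R m i) ⬝ᵥ θ) / (n:ℝ)) - R j i) * φb i (Function.update θ j (θ j - (n:ℝ))))
        atTop (𝓝 (∑ i, if i = j then -(R j j * φb j θ) else 0)) := by
      apply tendsto_finset_sum
      intro i _
      by_cases hi : i = j
      · rw [hi]
        simp only [if_true]
        have h1 : Tendsto (fun n : ℕ => (((fun m => R m j) ⬝ᵥ θ) / (n:ℝ)) - R j j)
            atTop (𝓝 (0 - R j j)) :=
          (tendsto_const_div_atTop_nhds_zero_nat _).sub_const _
        have h2 := h1.mul_const (φb j θ)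
        have h3 : Tendsto (fun n : ℕ =>
            ((((fun m => R m j) ⬝ᵥ θ) / (n:ℝ)) - R j j) * φb j θ)
            atTop (𝓝 (-(R j j * φb j θ))) := by simpa using h2
        exact h3.congr fun n => by rw [hconst n]
      · simp only [if_neg hi]
        have h1 : Tendsto (fun n : ℕ => (((fun m => R m i) ⬝ᵥ θ) / (n:ℝ)) - R j i)
            atTop (𝓝 (0 - R j i)) :=
          (tendsto_const_div_atTop_nhds_zero_nat _).sub_const _
        have := h1.mul (hzero i hi)
        simpa using this
    simpa [Finset.sum_ite_eq' Finset.univ j] using hsum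
  -- denominator limit
  have hden : Tendsto (fun n : ℕ =>
      (A + (n:ℝ) * B - (1/2 : ℝ) * S j j * (n:ℝ)^2) / (n:ℝ)^2)
      atTop (𝓝 (-(1/2 * S j j))) := by
    have h1 : Tendsto (fun n : ℕ => A / (n:ℝ)^2 + B / (n:ℝ) - (1/2 : ℝ) * S j j)
        atTop (𝓝 (0 + 0 - 1/2 * S j j)) :=
      ((tendsto_const_nhds.div_atTop hnpow).add
        (tendsto_const_div_atTop_nhds_zero_nat B)).sub_const _
    have h2 : (fun n : ℕ => A / (n:ℝ)^2 + B / (n:ℝ) - (1/2 : ℝ) * S j j)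
        =ᶠ[atTop] fun n : ℕ =>
          (A + (n:ℝ) * B - (1/2 : ℝ) * S j j * (n:ℝ)^2) / (n:ℝ)^2 := by
      filter_upwards [eventually_ge_atTop 1] with n hn
      have hn0 : (n:ℝ) ≠ 0 := by
        have : (1:ℝ) ≤ (n:ℝ) := by exact_mod_cast hn
        linarith
      field_simp
    have := h1.congr' h2
    simpa using this
  -- eventually the denominator is nonzero
  have hevneg : ∀ᶠ n : ℕ in atTop,
      (A + (n:ℝ) * B - (1/2 : ℝ) * S j j * (n:ℝ)^2) / (n:ℝ)^2 < 0 :=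
    hden.eventually_lt_const (by nlinarith [hSj])
  -- assemble
  have hT := hnum.div hden (by nlinarith [hSj] : -(1/2 * S j j) ≠ 0)
  have hval : -(R j j * φb j θ) / -(1/2 * S j j) = 2 * R j j * φb j θ / S j j := by
    rw [div_eq_div_iff (by nlinarith [hSj]) hSj.ne']
    ring
  rw [hval] at hT
  apply hT.congr'
  filter_upwards [eventually_ge_atTop 1, hevneg] with n hn hneg
  have hn1 : (1:ℝ) ≤ (n:ℝ) := by exact_mod_cast hn
  have hn0 : (n:ℝ) ≠ 0 := by linarith
  have hdenne : A + (n:ℝ) * B - (1/2 : ℝ) * S j j * (n:ℝ)^2 ≠ 0 := by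
    intro h
    rw [h] at hneg
    simp at hneg
  have hphi : φ (Function.update θ j (θ j - (n:ℝ)))
      = (∑ i, (((fun m => R m i) ⬝ᵥ θ) - (n:ℝ) * R j i)
          * φb i (Function.update θ j (θ j - (n:ℝ))))
        / (A + (n:ℝ) * B - (1/2 : ℝ) * S j j * (n:ℝ)^2) := by
    rw [eq_div_iff hdenne, mul_comm]
    exact hBARn n
  have hnumeq : (∑ i,
      ((((fun m => R m i) ⬝ᵥ θ) / (n:ℝ)) - R j i) * φb i (Function.update θ j (θ j - (n:ℝ))))
      = (∑ i, (((fun m => R m i) ⬝ᵥ θ) - (n:ℝ) * R j i)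
          * φb i (Function.update θ j (θ j - (n:ℝ)))) / (n:ℝ) := by
    rw [Finset.sum_div]
    apply Finset.sum_congr rfl
    intro i _
    field_simp
    try ring
  simp only [Pi.div_apply]
  rw [hnumeq, hphi]
  exact div_div_helper _ _ _ hdenne hn0


/-- Suppose `Σ_{jj} > 0` and `R_{jj} ≠ 0` for all `j`, and
`(π; ν_1,…,ν_d)` satisfies the basic adjoint relationship (BAR) for `(Σ, μ, R)`.
If `(K,L)` is a nonempty partition of the coordinates and the moment generating
function factorizes, `φ(θ) = φ(θ̂^K) φ(θ̂^L)` for all `θ ≤ 0`, then for every `j ∈ K`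
and `θ ≤ 0`, `φ_j(θ) = φ_j(θ̂^K) φ(θ̂^L)`. -/
theorem statement14 (d : ℕ) (hd : 2 ≤ d)
    (S : Matrix (Fin d) (Fin d) ℝ) (hSsymm : S.IsSymm)
    (μ : Fin d → ℝ) (R : Matrix (Fin d) (Fin d) ℝ)
    (hSd : ∀ j, 0 < S j j) (hRd : ∀ j, R j j ≠ 0)
    (π : Measure (Fin d → ℝ)) [IsProbabilityMeasure π]
    (hπsupp : π {x : Fin d → ℝ | ¬ ∀ i, 0 ≤ x i} = 0)
    (ν : Fin d → Measure (Fin d → ℝ))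
    (hνfin : ∀ i, IsFiniteMeasure (ν i))
    (hνne : ∀ i, ν i ≠ 0)
    (hνsupp : ∀ i, ν i {x : Fin d → ℝ | ¬ ∀ m, 0 ≤ x m} = 0)
    (hνconc : ∀ i, ν i {x : Fin d → ℝ | x i ≠ 0} = 0)
    (hνpair : ∀ i j : Fin d, i ≠ j → ν i {x : Fin d → ℝ | x i = 0 ∧ x j = 0} = 0)
    (φ : (Fin d → ℝ) → ℝ) (hφ : ∀ θ, φ θ = ∫ x, Real.exp (θ ⬝ᵥ x) ∂π)
    (φb : Fin d → (Fin d → ℝ) → ℝ)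
    (hφb : ∀ i θ, φb i θ = ∫ x, Real.exp (θ ⬝ᵥ x) ∂(ν i))
    (hBAR : ∀ θ : Fin d → ℝ, (∀ m, θ m ≤ 0) →
      (-(1/2 : ℝ) * (θ ⬝ᵥ S.mulVec θ) - μ ⬝ᵥ θ) * φ θ
        = ∑ i, ((fun m => R m i) ⬝ᵥ θ) * φb i θ)
    (K L : Finset (Fin d)) (hK : K.Nonempty) (hL : L.Nonempty)
    (hdisj : Disjoint K L) (hcover : K ∪ L = Finset.univ)
    (hfac : ∀ θ : Fin d → ℝ, (∀ m, θ m ≤ 0) →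
      φ θ = φ (fun m => if m ∈ K then θ m else 0) * φ (fun m => if m ∈ L then θ m else 0)) :
    ∀ j ∈ K, ∀ θ : Fin d → ℝ, (∀ m, θ m ≤ 0) →
      φb j θ = φb j (fun m => if m ∈ K then θ m else 0)
        * φ (fun m => if m ∈ L then θ m else 0) := by
  intro j hj θ hθ
  set u : Fin d → ℝ := fun m => if m ∈ K then θ m else 0 with hu
  set v : Fin d → ℝ := fun m => if m ∈ L then θ m else 0 with hv
  have hjL : j ∉ L := Finset.disjoint_left.mp hdisj hj
  have hu_le : ∀ m, u m ≤ 0 := by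
    intro m
    by_cases h : m ∈ K <;> simp [hu, h, hθ m]
  have T1 := main_limit S hSsymm μ R j (hSd j) ν hνfin hνsupp hνconc hνpair φ φb hφb hBAR θ hθ
  have T2 := main_limit S hSsymm μ R j (hSd j) ν hνfin hνsupp hνconc hνpair φ φb hφb hBAR u hu_le
  have T2' := T2.mul_const (φ v)
  have heq : ∀ n : ℕ, (n:ℝ) * φ (Function.update θ j (θ j - (n:ℝ)))
      = ((n:ℝ) * φ (Function.update u j (u j - (n:ℝ)))) * φ v := by
    intro n
    have hle : ∀ m, Function.update θ j (θ j - (n:ℝ)) m ≤ 0 := by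
      intro m
      by_cases hm : m = j
      · rw [hm, Function.update_self]
        linarith [hθ j, Nat.cast_nonneg (α := ℝ) n]
      · rw [Function.update_of_ne hm]; exact hθ m
    have h1 := hfac (Function.update θ j (θ j - (n:ℝ))) hle
    have e1 : (fun m => if m ∈ K then Function.update θ j (θ j - (n:ℝ)) m else 0)
        = Function.update u j (u j - (n:ℝ)) := by
      funext m
      by_cases hm : m = j
      · rw [hm]
        simp [Function.update_self, hj, hu]
      · rw [Function.update_of_ne hm]
        simp only [Function.update_of_ne hm, hu]
    have e2 : (fun m => if m ∈ L then Function.update θ j (θ j - (n:ℝ)) m else 0) = v := by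
      funext m
      by_cases hm : m = j
      · rw [hm]
        simp [hjL, hv]
      · rw [Function.update_of_ne hm]
    rw [h1, e1, e2]
    ring
  have huniq := tendsto_nhds_unique (T1.congr heq) T2'
  have hS0 : S j j ≠ 0 := (hSd j).ne'
  have h2R : (2:ℝ) * R j j ≠ 0 := by simp [hRd j]
  field_simp at huniq
  apply mul_left_cancel₀ h2R
  linear_combination 2 * huniq
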